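/- If G is a connected loopless multigraph that contains a bridge, then G admits an odd 3-edge-coloring. -/

import Mathlib

open Finset
open scoped symmDiff

section OddColor

set_option linter.unusedSectionVars false

variable {V E : Type*} [DecidableEq V] [DecidableEq E]

/-- degree of `v` in edge set `F` -/
def dg (ends : E → Sym2 V) (F : Finset E) (v : V) : ℕ :=
  (F.filter (fun e => v ∈ ends e)).card

/-- degree mod 2 -/
def dz (ends : E → Sym2 V) (F : Finset E) (v : V) : ZMod 2 :=
  (dg ends F v : ZMod 2)

/-- connectivity via allowed edges -/
def conn (ends : E → Sym2 V) (A : E → Prop) (a b : V) : Prop :=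
  Relation.ReflTransGen (fun x y => ∃ e, A e ∧ ends e = s(x, y)) a b

variable {ends : E → Sym2 V}

lemma dz_eq_sum (F : Finset E) (v : V) :
    dz ends F v = ∑ e ∈ F, (if v ∈ ends e then (1 : ZMod 2) else 0) := by
  rw [dz, dg, Finset.card_filter]
  push_cast
  simp

lemma dz_empty (v : V) : dz ends (∅ : Finset E) v = 0 := by simp [dz, dg]

lemma dz_symmDiff (F G : Finset E) (v : V) :
    dz ends (F ∆ G) v = dz ends F v + dz ends G v := by
  simp only [dz_eq_sum]
  have h1 : F ∆ G = (F ∪ G) \ (F ∩ G) := symmDiff_eq_sup_sdiff_inf F G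
  rw [h1, Finset.sum_sdiff_eq_sub (Finset.inter_subset_union)]
  have h2 : (∑ e ∈ F ∪ G, if v ∈ ends e then (1:ZMod 2) else 0)
      + (∑ e ∈ F ∩ G, if v ∈ ends e then (1:ZMod 2) else 0)
      = (∑ e ∈ F, if v ∈ ends e then (1:ZMod 2) else 0)
      + (∑ e ∈ G, if v ∈ ends e then (1:ZMod 2) else 0) := Finset.sum_union_inter
  rw [sub_eq_iff_eq_add]
  rw [← h2]
  rw [add_assoc, CharTwo.add_self_eq_zero, add_zero]

lemma odd_dg_iff (F : Finset E) (v : V) : Odd (dg ends F v) ↔ dz ends F v = 1 := by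
  rw [Nat.odd_iff, dz, ← ZMod.natCast_mod]
  rcases Nat.mod_two_eq_zero_or_one (dg ends F v) with h | h <;> rw [h] <;> decide

lemma even_dg_iff (F : Finset E) (v : V) : Even (dg ends F v) ↔ dz ends F v = 0 := by
  rw [Nat.even_iff, dz, ← ZMod.natCast_mod]
  rcases Nat.mod_two_eq_zero_or_one (dg ends F v) with h | h <;> rw [h] <;> decide

lemma dg_mono {F G : Finset E} (h : F ⊆ G) (v : V) : dg ends F v ≤ dg ends G v :=
  Finset.card_le_card (Finset.filter_subset_filter _ h)

lemma dg_sdiff {F G : Finset E} (h : F ⊆ G) (v : V) :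
    dg ends (G \ F) v = dg ends G v - dg ends F v := by
  rw [dg, dg, dg]
  have : (G \ F).filter (fun e => v ∈ ends e)
      = G.filter (fun e => v ∈ ends e) \ F.filter (fun e => v ∈ ends e) := by
    ext e; simp only [mem_filter, mem_sdiff]; tauto
  rw [this, Finset.card_sdiff_of_subset (Finset.filter_subset_filter _ h)]


/-- indicator of the pair {a,b} -/
def pairInd (a b v : V) : ZMod 2 := (if v = a then 1 else 0) + (if v = b then 1 else 0)

lemma pairInd_comm (a b v : V) : pairInd a b v = pairInd b a v := add_comm _ _

lemma pairInd_self (a v : V) : pairInd a a v = 0 := CharTwo.add_self_eq_zero _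

lemma pairInd_cancel (a b c v : V) : pairInd a b v + pairInd b c v = pairInd a c v := by
  unfold pairInd
  have h : (if v = b then (1 : ZMod 2) else 0) + (if v = b then (1 : ZMod 2) else 0) = 0 :=
    CharTwo.add_self_eq_zero _
  linear_combination h

lemma dz_singleton {e : E} {a b : V} (he : ends e = s(a, b)) (hab : a ≠ b) (v : V) :
    dz ends ({e} : Finset E) v = pairInd a b v := by
  rw [dz, dg, Finset.filter_singleton]
  by_cases hv : v ∈ ends e
  · rw [if_pos hv]
    rw [he, Sym2.mem_iff] at hv
    rcases hv with h | h <;> subst h <;> simp [pairInd, hab, Ne.symm hab]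
  · rw [if_neg hv]
    rw [he, Sym2.mem_iff] at hv
    push_neg at hv
    simp [pairInd, hv.1, hv.2]

lemma conn_symm {A : E → Prop} : Symmetric (conn ends A) :=
  fun a b h => by
    haveI : Std.Symm (fun x y => ∃ e, A e ∧ ends e = s(x, y)) :=
      ⟨fun _ _ ⟨e, hA, he⟩ => ⟨e, hA, by rw [he, Sym2.eq_swap]⟩⟩
    exact Std.Symm.symm (r := Relation.ReflTransGen (fun x y => ∃ e, A e ∧ ends e = s(x, y))) a b h

lemma conn_mono {A A' : E → Prop} (h : ∀ e, A e → A' e) {a b : V} (hc : conn ends A a b) :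
    conn ends A' a b :=
  Relation.ReflTransGen.mono (r := fun x y => ∃ e, A e ∧ ends e = s(x, y))
    (p := fun x y => ∃ e, A' e ∧ ends e = s(x, y))
    (by intro _ _ ⟨e, hA, he⟩; exact ⟨e, h e hA, he⟩) _ _ hc

lemma conn_single {A : E → Prop} {e : E} {x y : V} (hA : A e) (he : ends e = s(x, y)) :
    conn ends A x y :=
  Relation.ReflTransGen.single ⟨e, hA, he⟩

lemma conn_isolated {A : E → Prop} {u x : V} (h : conn ends A u x) (hne : u ≠ x) :
    ∃ e, A e ∧ u ∈ ends e := by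
  rcases h.cases_head with rfl | ⟨b, ⟨e, hA, he⟩, _⟩
  · exact absurd rfl hne
  · exact ⟨e, hA, by rw [he]; exact Sym2.mem_mk_left u b⟩

lemma pairjoin (hloop : ∀ e, ¬ (ends e).IsDiag) {A : E → Prop} {a b : V}
    (h : conn ends A a b) :
    ∃ P : Finset E, (∀ e ∈ P, A e) ∧ ∀ v, dz ends P v = pairInd a b v := by
  induction h with
  | refl => exact ⟨∅, by simp, fun v => by rw [dz_empty, pairInd_self]⟩
  | tail _ hbc ih =>
      obtain ⟨P, hPA, hP⟩ := ih
      rename_i b c _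
      obtain ⟨e, hA, he⟩ := hbc
      have hbcne : b ≠ c := by
        intro h'
        exact hloop e (by rw [he, h']; exact Sym2.mk_isDiag_iff.mpr rfl)
      refine ⟨P ∆ {e}, ?_, ?_⟩
      · intro f hf
        rw [Finset.mem_symmDiff] at hf
        rcases hf with ⟨hf, _⟩ | ⟨hf, _⟩
        · exact hPA f hf
        · rw [Finset.mem_singleton] at hf; subst hf; exact hA
      · intro v
        rw [dz_symmDiff, hP, dz_singleton he hbcne, pairInd_cancel]


lemma tjoin (hloop : ∀ e, ¬ (ends e).IsDiag) {A : E → Prop} (T : Finset V)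
    (hT : Even T.card) (hconnT : ∀ t1 ∈ T, ∀ t2 ∈ T, conn ends A t1 t2) :
    ∃ F : Finset E, (∀ e ∈ F, A e) ∧ ∀ v, dz ends F v = if v ∈ T then 1 else 0 := by
  classical
  revert hT hconnT
  induction T using Finset.strongInduction with
  | _ T ih =>
    intro hT hconnT
    rcases T.eq_empty_or_nonempty with rfl | ⟨t1, ht1⟩
    · exact ⟨∅, by simp, fun v => by simp [dz_empty]⟩
    · have hc1 : 1 ≤ T.card := Finset.card_pos.mpr ⟨t1, ht1⟩
      have hcard : 2 ≤ T.card := by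
        rcases hT with ⟨k, hk⟩; omega
      obtain ⟨t2, ht2⟩ : (T.erase t1).Nonempty := Finset.card_pos.mp (by
        rw [Finset.card_erase_of_mem ht1]; omega)
      have ht2T : t2 ∈ T := Finset.mem_of_mem_erase ht2
      have hne : t2 ≠ t1 := Finset.ne_of_mem_erase ht2
      have hsub : (T.erase t1).erase t2 ⊂ T :=
        lt_of_le_of_lt (Finset.erase_subset _ _) (Finset.erase_ssubset ht1)
      have hcard' : ((T.erase t1).erase t2).card = T.card - 2 := by
        rw [Finset.card_erase_of_mem ht2, Finset.card_erase_of_mem ht1]; omega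
      obtain ⟨F', hF'A, hF'⟩ := ih _ hsub
        (by rcases hT with ⟨k, hk⟩; rw [hcard']; exact ⟨k - 1, by omega⟩)
        (fun x hx y hy => hconnT x (Finset.mem_of_mem_erase (Finset.mem_of_mem_erase hx))
          y (Finset.mem_of_mem_erase (Finset.mem_of_mem_erase hy)))
      obtain ⟨P, hPA, hP⟩ := pairjoin hloop (hconnT t1 ht1 t2 ht2T)
      refine ⟨F' ∆ P, ?_, ?_⟩
      · intro e he
        rw [Finset.mem_symmDiff] at he
        rcases he with ⟨he, _⟩ | ⟨he, _⟩
        · exact hF'A e he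
        · exact hPA e he
      · intro v
        rw [dz_symmDiff, hF', hP]
        by_cases h1 : v = t1
        · subst h1
          simp [pairInd, Finset.mem_erase, ht1, Ne.symm hne]
        · by_cases h2 : v = t2
          · subst h2
            simp [pairInd, Finset.mem_erase, ht2T, hne, h1]
          · simp [pairInd, Finset.mem_erase, h1, h2]

/-- no nonempty all-even-degree subset -/
def Acyclic (ends : E → Sym2 V) (F : Finset E) : Prop :=
  ∀ C ⊆ F, (∀ v, dz ends C v = 0) → C = ∅

lemma acyclic_subset {F G : Finset E} (h : F ⊆ G) (hG : Acyclic ends G) : Acyclic ends F :=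
  fun C hC h0 => hG C (hC.trans h) h0

lemma exists_acyclic_join (hloop : ∀ e, ¬ (ends e).IsDiag) {A : E → Prop} (T : Finset V)
    (hT : Even T.card) (hconnT : ∀ t1 ∈ T, ∀ t2 ∈ T, conn ends A t1 t2) :
    ∃ F : Finset E, (∀ e ∈ F, A e) ∧ (∀ v, dz ends F v = if v ∈ T then 1 else 0) ∧
      Acyclic ends F := by
  classical
  obtain ⟨F0, hF0⟩ := tjoin hloop T hT hconnT
  suffices h : ∀ n (F : Finset E), F.card = n → (∀ e ∈ F, A e) →
      (∀ v, dz ends F v = if v ∈ T then 1 else 0) →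
      ∃ F' : Finset E, (∀ e ∈ F', A e) ∧ (∀ v, dz ends F' v = if v ∈ T then 1 else 0) ∧
        Acyclic ends F' from h F0.card F0 rfl hF0.1 hF0.2
  intro n
  induction n using Nat.strong_induction_on with
  | _ n ih =>
    intro F hn hFA hFdz
    by_cases hac : Acyclic ends F
    · exact ⟨F, hFA, hFdz, hac⟩
    · rw [Acyclic] at hac
      push_neg at hac
      obtain ⟨C, hCF, hC0, hCne⟩ := hac
      have hCne' : C.Nonempty := hCne
      have hFC : F ∆ C = F \ C := by
        rw [symmDiff_def]
        have : C \ F = ∅ := Finset.sdiff_eq_empty_iff_subset.mpr hCF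
        rw [this]
        simp
      have hlt : (F \ C).card < n := by
        rw [← hn]
        exact Finset.card_lt_card (Finset.sdiff_ssubset hCF hCne')
      exact ih _ hlt (F \ C) rfl
        (fun e he => hFA e (Finset.mem_sdiff.mp he).1)
        (fun v => by rw [← hFC, dz_symmDiff, hC0 v, add_zero, hFdz])


def tok (c : V → Option (Fin 2)) (v : V) (i : Fin 2) : ℕ := if c v = some i then 1 else 0

lemma sym2_rep (z : Sym2 V) : ∃ a b, z = s(a, b) := Sym2.ind (fun a b => ⟨a, b, rfl⟩) z

lemma conn_of_edge {A : E → Prop} {e : E} (hA : A e) {u x : V}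
    (hu : u ∈ ends e) (hx : x ∈ ends e) : conn ends A u x := by
  by_cases h : u = x
  · subst h; exact Relation.ReflTransGen.refl
  · exact conn_single hA ((Sym2.mem_and_mem_iff h).mp ⟨hu, hx⟩)

lemma dg_pos_of_mem {F : Finset E} {e : E} (he : e ∈ F) {v : V} (hv : v ∈ ends e) :
    0 < dg ends F v :=
  Finset.card_pos.mpr ⟨e, Finset.mem_filter.mpr ⟨he, hv⟩⟩

lemma g2 (hloop : ∀ e, ¬ (ends e).IsDiag) :
    ∀ n (F : Finset E), F.card = n → Acyclic ends F →
    ∀ c : V → Option (Fin 2),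
      (∀ u v, u ≠ v → (c u).isSome → (c v).isSome → ¬ conn ends (· ∈ F) u v) →
      ∃ ψ : E → Fin 2, ∀ v i,
        (F.filter (fun e => ψ e = i ∧ v ∈ ends e)).card + tok c v i = 0 ∨
          Odd ((F.filter (fun e => ψ e = i ∧ v ∈ ends e)).card + tok c v i) := by
  classical
  intro n
  induction n using Nat.strong_induction_on with
  | _ n ih =>
    intro F hn hac c hI1
    rcases F.eq_empty_or_nonempty with rfl | hFne
    · refine ⟨fun _ => 0, fun v i => ?_⟩
      by_cases h : c v = some i <;> simp [tok, h, Nat.odd_iff]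
    -- choose a root
    have hroot : ∃ r : V, 0 < dg ends F r ∧
        ((c r).isSome ∨ ∀ u, (c u).isSome → dg ends F u = 0) := by
      by_cases h : ∃ u, (c u).isSome ∧ 0 < dg ends F u
      · obtain ⟨u, hu1, hu2⟩ := h; exact ⟨u, hu2, Or.inl hu1⟩
      · push_neg at h
        obtain ⟨e, he⟩ := hFne
        obtain ⟨a, b, hab⟩ := sym2_rep (ends e)
        refine ⟨a, dg_pos_of_mem he (by rw [hab]; exact Sym2.mem_mk_left a b), Or.inr ?_⟩
        intro u hu
        exact Nat.eq_zero_of_not_pos (fun hpos => absurd (h u hu) (by omega))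
    obtain ⟨r, hr, hrtype⟩ := hroot
    set S := F.filter (fun e => r ∈ ends e) with hSdef
    have hSF : S ⊆ F := Finset.filter_subset _ _
    have hSne : S.Nonempty := Finset.card_pos.mp hr
    have hrS : ∀ e ∈ S, r ∈ ends e := fun e he => (Finset.mem_filter.mp he).2
    have hSmem : ∀ e ∈ F, r ∈ ends e → e ∈ S :=
      fun e he hre => Finset.mem_filter.mpr ⟨he, hre⟩
    have hw : ∀ e ∈ S, ∃ x, x ≠ r ∧ ends e = s(r, x) := by
      intro e he
      have h1 : r ∈ ends e := hrS e he
      refine ⟨Sym2.Mem.other' h1, ?_, (Sym2.other_spec' h1).symm⟩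
      intro h2
      exact hloop e (by rw [← Sym2.other_spec' h1, h2]; exact Sym2.mk_isDiag_iff.mpr rfl)
    choose w hwr hwe using hw
    -- distinct other-endpoints
    have hW1 : ∀ (e : E) (he : e ∈ S) (f : E) (hf : f ∈ S), e ≠ f → w e he ≠ w f hf := by
      intro e he f hf hef heq
      have hD0 : ∀ x, dz ends (({e} : Finset E) ∆ {f}) x = 0 := by
        intro x
        rw [dz_symmDiff, dz_singleton (hwe e he) (Ne.symm (hwr e he)),
          dz_singleton (hwe f hf) (Ne.symm (hwr f hf)), ← heq]
        exact CharTwo.add_self_eq_zero _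
      have hsub : ({e} : Finset E) ∆ {f} ⊆ F := by
        intro g hg
        rw [Finset.mem_symmDiff] at hg
        rcases hg with ⟨hg, _⟩ | ⟨hg, _⟩ <;> rw [Finset.mem_singleton] at hg <;> subst hg
        · exact hSF he
        · exact hSF hf
      have hemem : e ∈ ({e} : Finset E) ∆ {f} := by
        rw [Finset.mem_symmDiff]
        exact Or.inl ⟨Finset.mem_singleton_self e, by simpa using hef⟩
      rw [hac _ hsub hD0] at hemem
      exact absurd hemem (Finset.notMem_empty e)
    -- membership in an S-edge determines it, for v ≠ r
    have hveqw : ∀ (v : V), v ≠ r → ∀ (e : E) (he : e ∈ S), v ∈ ends e → v = w e he := by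
      intro v hv e he hve
      rw [hwe e he, Sym2.mem_iff] at hve
      rcases hve with h | h
      · exact absurd h hv
      · exact h
    have hU : ∀ (v : V), v ≠ r → ∀ (e : E) (he : e ∈ S), v ∈ ends e →
        ∀ (f : E) (hf : f ∈ S), v ∈ ends f → e = f := by
      intro v hv e he hve f hf hvf
      by_contra hef
      exact hW1 e he f hf hef ((hveqw v hv e he hve).symm.trans (hveqw v hv f hf hvf))
    -- star coloring
    have hstar : ∃ ψS : E → Fin 2, ∀ i : Fin 2,
        (S.filter (fun e => ψS e = i)).card + tok c r i = 0 ∨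
          Odd ((S.filter (fun e => ψS e = i)).card + tok c r i) := by
      have hfconst : ∀ (j i : Fin 2), S.filter (fun _ => (j : Fin 2) = i)
          = if j = i then S else ∅ := by
        intro j i
        by_cases h : j = i <;> simp [h]
      rcases hcr : c r with _ | i0
      · by_cases hk : Even S.card
        · obtain ⟨e1, he1⟩ := id hSne
          refine ⟨fun e => if e = e1 then 1 else 0, fun i => ?_⟩
          have h1 : S.filter (fun e => (if e = e1 then (1 : Fin 2) else 0) = 1) = {e1} := by
            ext f
            simp only [Finset.mem_filter, Finset.mem_singleton]
            constructor
            · rintro ⟨hf, hcond⟩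
              by_contra hne
              rw [if_neg hne] at hcond
              exact absurd hcond (by decide)
            · rintro rfl
              exact ⟨he1, by simp⟩
          have h0 : S.filter (fun e => (if e = e1 then (1 : Fin 2) else 0) = 0) = S.erase e1 := by
            ext f
            simp only [Finset.mem_filter, Finset.mem_erase]
            constructor
            · rintro ⟨hf, hcond⟩
              refine ⟨?_, hf⟩
              rintro rfl
              rw [if_pos rfl] at hcond
              exact absurd hcond (by decide)
            · rintro ⟨hne, hf⟩
              exact ⟨hf, by rw [if_neg hne]⟩
          have hcount : 1 ≤ S.card := Finset.card_pos.mpr hSne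
          rcases (by decide : ∀ i : Fin 2, i = 0 ∨ i = 1) i with rfl | rfl
          · rw [h0, Finset.card_erase_of_mem he1]
            right
            simp only [tok, hcr]
            rw [if_neg (by simp)]
            rcases hk with ⟨m, hm⟩
            exact ⟨m - 1, by omega⟩
          · rw [h1, Finset.card_singleton]
            right
            simp only [tok, hcr]
            rw [if_neg (by simp)]
            exact ⟨0, rfl⟩
        · refine ⟨fun _ => 0, fun i => ?_⟩
          rw [hfconst 0 i]
          rcases (by decide : ∀ i : Fin 2, i = 0 ∨ i = 1) i with rfl | rfl
          · rw [if_pos rfl]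
            right
            simp only [tok, hcr]
            rw [if_neg (by simp)]
            rw [Nat.odd_iff] at *
            rw [Nat.even_iff] at hk
            omega
          · rw [if_neg (by decide)]
            left
            simp [tok, hcr]
      · by_cases hk : Even S.card
        · refine ⟨fun _ => i0, fun i => ?_⟩
          rw [hfconst i0 i]
          by_cases h : i0 = i
          · subst h
            rw [if_pos rfl]
            right
            simp only [tok, hcr, if_pos rfl, if_true]
            rw [Nat.odd_iff]
            rw [Nat.even_iff] at hk
            omega
          · rw [if_neg h]
            left
            simp only [Finset.card_empty, tok, hcr, zero_add]
            rw [if_neg (by simpa using h)]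
        · have hne2 : ∀ a : Fin 2, ¬ a = a + 1 := by decide
          refine ⟨fun _ => i0 + 1, fun i => ?_⟩
          rw [hfconst (i0 + 1) i]
          by_cases h : i0 + 1 = i
          · rw [if_pos h]
            right
            have ht : tok c r i = 0 := by
              simp only [tok, hcr]
              rw [if_neg]
              intro h2
              rw [Option.some_inj] at h2
              rw [← h] at h2
              exact hne2 i0 h2
            rw [ht, add_zero]
            rw [Nat.odd_iff]
            rw [Nat.even_iff] at hk
            omega
          · rw [if_neg h]
            by_cases h2 : i0 = i
            · right
              subst h2
              simp only [Finset.card_empty, tok, hcr, zero_add, if_pos rfl]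
              exact odd_one
            · left
              simp only [Finset.card_empty, tok, hcr, zero_add]
              rw [if_neg (by simpa using h2)]
    obtain ⟨ψS, hψS⟩ := hstar
    -- the rest of the graph
    set F' := F \ S with hF'def
    have hF'F : F' ⊆ F := Finset.sdiff_subset
    have hF'card : F'.card < n := by
      rw [← hn, hF'def, Finset.card_sdiff_of_subset hSF]
      have h1 : 1 ≤ S.card := Finset.card_pos.mpr hSne
      have h2 : S.card ≤ F.card := Finset.card_le_card hSF
      omega
    have hacF' : Acyclic ends F' := acyclic_subset hF'F hac
    have hSF'disj : ∀ e ∈ F', e ∉ S := fun e he => (Finset.mem_sdiff.mp he).2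
    -- new token map
    set c' : V → Option (Fin 2) := fun v =>
      if v = r then none
      else if h : ∃ e ∈ S, v ∈ ends e then some (ψS h.choose)
      else c v with hc'def
    have hc'r : c' r = none := by simp [hc'def]
    have hc'nb : ∀ (v : V), v ≠ r → ∀ (e : E), e ∈ S → v ∈ ends e → c' v = some (ψS e) := by
      intro v hv e he hve
      have hex : ∃ e ∈ S, v ∈ ends e := ⟨e, he, hve⟩
      simp only [hc'def, if_neg hv, dif_pos hex]
      exact congrArg (some ∘ ψS)
        (hU v hv hex.choose hex.choose_spec.1 hex.choose_spec.2 e he hve)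
    have hc'o : ∀ (v : V), v ≠ r → (¬ ∃ e ∈ S, v ∈ ends e) → c' v = c v := by
      intro v hv hnb
      simp only [hc'def, if_neg hv, dif_neg hnb]
    -- neighbours of the root carry no old token
    have hNT : ∀ (e : E) (he : e ∈ S), ¬ (c (w e he)).isSome := by
      intro e he hcw
      rcases hrtype with hrt | hrt
      · exact hI1 (w e he) r (hwr e he) hcw hrt
          (conn_symm (conn_single (hSF he) (hwe e he)))
      · have h0 := hrt _ hcw
        have h1 : 0 < dg ends F (w e he) :=
          dg_pos_of_mem (hSF he) (by rw [hwe e he]; exact Sym2.mem_mk_right r _)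
        omega
    -- invariant for the recursive call
    have hI1' : ∀ u v, u ≠ v → (c' u).isSome → (c' v).isSome →
        ¬ conn ends (· ∈ F') u v := by
      have hchar : ∀ u, (c' u).isSome → u ≠ r ∧ ((∃ e ∈ S, u ∈ ends e) ∨ (c u).isSome) := by
        intro u hu
        by_cases h1 : u = r
        · rw [h1, hc'r] at hu; simp at hu
        · refine ⟨h1, ?_⟩
          by_cases h2 : ∃ e ∈ S, u ∈ ends e
          · exact Or.inl h2
          · rw [hc'o u h1 h2] at hu; exact Or.inr hu
      have key2 : ∀ u v, u ≠ v → v ≠ r → (∃ e ∈ S, u ∈ ends e) → (c v).isSome →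
          conn ends (· ∈ F') u v → False := by
        rintro u v huv hvr ⟨e, he, hue⟩ hcv hconn
        rcases hrtype with hrt | hrt
        · refine hI1 v r hvr hcv hrt ?_
          refine Relation.ReflTransGen.trans
            (conn_symm (conn_mono (fun f hf => hF'F hf) hconn)) ?_
          exact conn_of_edge (A := (· ∈ F)) (hSF he) hue (hrS e he)
        · have h0 := hrt v hcv
          obtain ⟨f, hf, hvf⟩ := conn_isolated (conn_symm hconn) (Ne.symm huv)
          have h1 : 0 < dg ends F v := dg_pos_of_mem (hF'F hf) hvf
          omega
      have key1 : ∀ u v, u ≠ v → u ≠ r → v ≠ r → (∃ e ∈ S, u ∈ ends e) →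
          (∃ e ∈ S, v ∈ ends e) → conn ends (· ∈ F') u v → False := by
        rintro u v huv hur hvr ⟨eu, heu, huu⟩ ⟨ev, hev, hvv⟩ hconn
        have hueq : ends eu = s(r, u) := by
          rw [hveqw u hur eu heu huu]
          exact hwe eu heu
        have hveq : ends ev = s(r, v) := by
          rw [hveqw v hvr ev hev hvv]
          exact hwe ev hev
        have hef : eu ≠ ev := by
          intro h
          subst h
          apply huv
          rw [hveqw u hur eu heu huu, hveqw v hvr eu hev hvv]
        obtain ⟨P, hPF, hP⟩ := pairjoin hloop hconn
        set D := (P ∆ {eu}) ∆ {ev} with hDdef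
        have hDF : D ⊆ F := by
          intro g hg
          rw [Finset.mem_symmDiff] at hg
          rcases hg with ⟨hg, _⟩ | ⟨hg, _⟩
          · rw [Finset.mem_symmDiff] at hg
            rcases hg with ⟨hg, _⟩ | ⟨hg, _⟩
            · exact hF'F (hPF g hg)
            · rw [Finset.mem_singleton] at hg; subst hg; exact hSF heu
          · rw [Finset.mem_singleton] at hg; subst hg; exact hSF hev
        have hD0 : ∀ x, dz ends D x = 0 := by
          intro x
          rw [hDdef, dz_symmDiff, dz_symmDiff, hP,
            dz_singleton hueq (Ne.symm hur), dz_singleton hveq (Ne.symm hvr)]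
          rw [pairInd_comm u v x, pairInd_comm r u x]
          rw [pairInd_cancel v u r x, pairInd_cancel v r v x]
          exact pairInd_self v x
        have hDempty := hac D hDF hD0
        have heuD : eu ∈ D := by
          have h1 : eu ∉ P := fun h => hSF'disj eu (hPF eu h) heu
          rw [hDdef, Finset.mem_symmDiff]
          left
          constructor
          · rw [Finset.mem_symmDiff]
            right
            exact ⟨Finset.mem_singleton_self eu, h1⟩
          · rw [Finset.mem_singleton]
            exact hef
        rw [hDempty] at heuD
        exact absurd heuD (Finset.notMem_empty eu)
      intro u v huv hcu hcv hconn
      obtain ⟨hur, hu2⟩ := hchar u hcu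
      obtain ⟨hvr, hv2⟩ := hchar v hcv
      rcases hu2 with hunb | huold
      · rcases hv2 with hvnb | hvold
        · exact key1 u v huv hur hvr hunb hvnb hconn
        · exact key2 u v huv hvr hunb hvold hconn
      · rcases hv2 with hvnb | hvold
        · exact key2 v u (Ne.symm huv) hur hvnb huold (conn_symm hconn)
        · exact hI1 u v huv huold hvold (conn_mono (fun f hf => hF'F hf) hconn)
    -- recursive colouring
    obtain ⟨ψ', hψ'⟩ := ih F'.card hF'card F' rfl hacF' c' hI1'
    refine ⟨fun e => if e ∈ S then ψS e else ψ' e, ?_⟩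
    intro v i
    have hsplit : (F.filter (fun e => (if e ∈ S then ψS e else ψ' e) = i ∧ v ∈ ends e)).card
        = (S.filter (fun e => ψS e = i ∧ v ∈ ends e)).card
          + (F'.filter (fun e => ψ' e = i ∧ v ∈ ends e)).card := by
      rw [← Finset.card_union_of_disjoint
        (Finset.disjoint_filter_filter (Finset.disjoint_sdiff))]
      congr 1
      ext f
      simp only [Finset.mem_union, Finset.mem_filter, hF'def, Finset.mem_sdiff]
      constructor
      · rintro ⟨hfF, hcond, hv⟩
        by_cases hfS : f ∈ S
        · exact Or.inl ⟨hfS, by rwa [if_pos hfS] at hcond, hv⟩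
        · exact Or.inr ⟨⟨hfF, hfS⟩, by rwa [if_neg hfS] at hcond, hv⟩
      · rintro (⟨hfS, hcond, hv⟩ | ⟨⟨hfF, hfS⟩, hcond, hv⟩)
        · exact ⟨hSF hfS, by rwa [if_pos hfS], hv⟩
        · exact ⟨hfF, by rwa [if_neg hfS], hv⟩
    rw [hsplit]
    by_cases hvr : v = r
    · subst hvr
      have hF'0 : F'.filter (fun e => ψ' e = i ∧ v ∈ ends e) = ∅ := by
        rw [Finset.filter_eq_empty_iff]
        rintro f hf ⟨_, hvf⟩
        exact hSF'disj f hf (hSmem f (hF'F hf) hvf)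
      have hSfilt : S.filter (fun e => ψS e = i ∧ v ∈ ends e)
          = S.filter (fun e => ψS e = i) := by
        apply Finset.filter_congr
        intro e he
        simp [hrS e he]
      rw [hF'0, Finset.card_empty, add_zero, hSfilt]
      exact hψS i
    · by_cases hnb : ∃ e ∈ S, v ∈ ends e
      · obtain ⟨e, he, hve⟩ := hnb
        have hSfilt : S.filter (fun f => ψS f = i ∧ v ∈ ends f)
            = if ψS e = i then {e} else ∅ := by
          ext f
          by_cases hc : ψS e = i
          · rw [if_pos hc]
            simp only [Finset.mem_filter, Finset.mem_singleton]
            constructor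
            · rintro ⟨hfS, _, hvf⟩
              exact (hU v hvr f hfS hvf e he hve)
            · rintro rfl
              exact ⟨he, hc, hve⟩
          · rw [if_neg hc]
            simp only [Finset.mem_filter, Finset.notMem_empty, iff_false]
            rintro ⟨hfS, hcond, hvf⟩
            exact hc ((hU v hvr f hfS hvf e he hve) ▸ hcond)
        have hcv0 : tok c v i = 0 := by
          have h1 : v = w e he := hveqw v hvr e he hve
          have h2 : c v = none := by
            have := hNT e he
            rw [← h1] at this
            cases hcvv : c v
            · rfl
            · rw [hcvv] at this; simp at this
          simp [tok, h2]
        have hc'v : c' v = some (ψS e) := hc'nb v hvr e he hve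
        have hIH := hψ' v i
        rw [tok, hc'v] at hIH
        rw [hSfilt, hcv0, add_zero]
        by_cases hc : ψS e = i
        · rw [if_pos hc, Finset.card_singleton]
          rw [if_pos (by rw [hc])] at hIH
          rcases hIH with h | h
          · omega
          · right
            rw [Nat.odd_iff] at *
            omega
        · rw [if_neg hc, Finset.card_empty, zero_add]
          rw [if_neg (by simpa using hc), add_zero] at hIH
          exact hIH
      · have hS0 : S.filter (fun f => ψS f = i ∧ v ∈ ends f) = ∅ := by
          rw [Finset.filter_eq_empty_iff]
          rintro f hf ⟨_, hvf⟩
          exact hnb ⟨f, hf, hvf⟩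
        have hc'v : c' v = c v := hc'o v hvr hnb
        have hIH := hψ' v i
        rw [tok, hc'v, ← tok] at hIH
        rw [hS0, Finset.card_empty, zero_add]
        exact hIH


lemma side [Fintype V] (X : Finset E) (t : V)
    (hloop : ∀ e, ¬ (ends e).IsDiag) (ht : dg ends X t = 1)
    (hconnX : ∀ u v, dg ends X u ≠ 0 → dg ends X v ≠ 0 → conn ends (· ∈ X) u v) :
    ∃ φ : E → Fin 3, ∀ (v : V) (j : Fin 3),
      (X.filter (fun e => φ e = j ∧ v ∈ ends e)).card = 0 ∨
        Odd (X.filter (fun e => φ e = j ∧ v ∈ ends e)).card := by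
  classical
  set T0 : Finset V := Finset.univ.filter (fun v => dg ends X v ≠ 0 ∧ Even (dg ends X v))
    with hT0
  have htT0 : t ∉ T0 := by simp [hT0, ht]
  set T : Finset V := if Even T0.card then T0 else insert t T0 with hT
  have hTeven : Even T.card := by
    by_cases h : Even T0.card
    · rw [hT, if_pos h]; exact h
    · rw [hT, if_neg h, Finset.card_insert_of_notMem htT0]
      rw [Nat.even_iff] at *
      omega
  have hTpos : ∀ v ∈ T, dg ends X v ≠ 0 := by
    intro v hv
    rw [hT] at hv
    by_cases h : Even T0.card
    · rw [if_pos h] at hv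
      exact ((Finset.mem_filter.mp hv).2).1
    · rw [if_neg h, Finset.mem_insert] at hv
      rcases hv with rfl | hv
      · omega
      · exact ((Finset.mem_filter.mp hv).2).1
  have hT0T : T0 ⊆ T := by
    rw [hT]
    by_cases h : Even T0.card
    · rw [if_pos h]
    · rw [if_neg h]
      exact Finset.subset_insert _ _
  obtain ⟨F, hFX, hFdz, hFac⟩ := exists_acyclic_join hloop T hTeven
    (fun a ha b hb => hconnX a b (hTpos a ha) (hTpos b hb))
  have hFX' : F ⊆ X := fun e he => hFX e he
  obtain ⟨ψ, hψ⟩ := g2 hloop F.card F rfl hFac (fun _ => none)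
    (fun u v _ hu _ => by simp at hu)
  have hFodd : ∀ v, v ∈ T → Odd (dg ends F v) := by
    intro v hv
    rw [odd_dg_iff, hFdz v, if_pos hv]
  have hFeven : ∀ v, v ∉ T → Even (dg ends F v) := by
    intro v hv
    rw [even_dg_iff, hFdz v, if_neg hv]
  refine ⟨fun e => if e ∈ F then (ψ e).succ else 0, ?_⟩
  intro v j
  rcases (by decide : ∀ j : Fin 3, j = 0 ∨ ∃ i : Fin 2, j = i.succ) j with rfl | ⟨i, rfl⟩
  · have hset : X.filter (fun e => (if e ∈ F then (ψ e).succ else 0) = 0 ∧ v ∈ ends e)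
        = (X \ F).filter (fun e => v ∈ ends e) := by
      ext e
      simp only [Finset.mem_filter, Finset.mem_sdiff]
      constructor
      · rintro ⟨hX, hcond, hv⟩
        refine ⟨⟨hX, ?_⟩, hv⟩
        intro hF
        rw [if_pos hF] at hcond
        exact Fin.succ_ne_zero _ hcond
      · rintro ⟨⟨hX, hF⟩, hv⟩
        exact ⟨hX, by rw [if_neg hF], hv⟩
    rw [hset]
    show dg ends (X \ F) v = 0 ∨ Odd (dg ends (X \ F) v)
    rw [dg_sdiff hFX']
    have hle : dg ends F v ≤ dg ends X v := dg_mono hFX' v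
    by_cases hvT : v ∈ T
    · by_cases hvT0 : v ∈ T0
      · have h1 := (Finset.mem_filter.mp hvT0).2
        right
        exact Nat.Even.sub_odd hle h1.2 (hFodd v hvT)
      · have hvt : v = t := by
          rw [hT] at hvT
          by_cases h : Even T0.card
          · rw [if_pos h] at hvT
            exact absurd hvT hvT0
          · rw [if_neg h, Finset.mem_insert] at hvT
            rcases hvT with h' | h'
            · exact h'
            · exact absurd h' hvT0
        subst hvt
        left
        have h1 := hFodd v hvT
        rw [Nat.odd_iff] at h1
        omega
    · have heven := hFeven v hvT
      by_cases h0 : dg ends X v = 0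
      · left
        omega
      · right
        have hodd : Odd (dg ends X v) := by
          by_contra hodd
          rw [Nat.not_odd_iff_even] at hodd
          exact hvT (hT0T (Finset.mem_filter.mpr ⟨Finset.mem_univ v, h0, hodd⟩))
        exact Nat.Odd.sub_even hle hodd heven
  · have hset : X.filter (fun e => (if e ∈ F then (ψ e).succ else 0) = i.succ ∧ v ∈ ends e)
        = F.filter (fun e => ψ e = i ∧ v ∈ ends e) := by
      ext e
      simp only [Finset.mem_filter]
      constructor
      · rintro ⟨hX, hcond, hv⟩
        by_cases hF : e ∈ F
        · rw [if_pos hF] at hcond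
          exact ⟨hF, Fin.succ_injective _ hcond, hv⟩
        · rw [if_neg hF] at hcond
          exact absurd hcond.symm (Fin.succ_ne_zero i)
      · rintro ⟨hF, hcond, hv⟩
        exact ⟨hFX' hF, by rw [if_pos hF, hcond], hv⟩
    rw [hset]
    have hres := hψ v i
    simpa [tok] using hres


lemma sideall [Fintype V] (hloop : ∀ e, ¬ (ends e).IsDiag)
    (e₀ : E) (a b : V) (hab : ends e₀ = s(a, b))
    (hnab : ¬ conn ends (· ≠ e₀) a b) (Xa : Finset E)
    (hXaspec : ∀ e, e ∈ Xa ↔ ∃ w ∈ ends e, conn ends (· ≠ e₀) w a) :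
    ∃ φ : E → Fin 3, ∀ (v : V) (j : Fin 3),
      (Xa.filter (fun e => φ e = j ∧ v ∈ ends e)).card = 0 ∨
      Odd (Xa.filter (fun e => φ e = j ∧ v ∈ ends e)).card := by
  classical
  have hne : a ≠ b := by
    intro h
    exact hloop e₀ (by rw [hab, h]; exact Sym2.mk_isDiag_iff.mpr rfl)
  have hae₀ : a ∈ ends e₀ := by rw [hab]; exact Sym2.mem_mk_left a b
  have hbe₀ : b ∈ ends e₀ := by rw [hab]; exact Sym2.mem_mk_right a b
  have he₀Xa : e₀ ∈ Xa := (hXaspec e₀).mpr ⟨a, hae₀, Relation.ReflTransGen.refl⟩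
  have hmemXa : ∀ (e : E) (v : V), v ∈ ends e → conn ends (· ≠ e₀) v a → e ∈ Xa :=
    fun e v hv hva => (hXaspec e).mpr ⟨v, hv, hva⟩
  have hXamem : ∀ e ∈ Xa, ∃ w ∈ ends e, conn ends (· ≠ e₀) w a :=
    fun e he => (hXaspec e).mp he
  -- b is a pendant vertex of Xa
  have hpend : dg ends Xa b = 1 := by
    have hset : Xa.filter (fun e => b ∈ ends e) = {e₀} := by
      ext e
      simp only [Finset.mem_filter, Finset.mem_singleton]
      constructor
      · rintro ⟨heXa, hbe⟩
        by_contra hee₀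
        obtain ⟨w, hwe, hwa⟩ := hXamem e heXa
        have hba : conn ends (· ≠ e₀) b a :=
          (conn_of_edge (A := (· ≠ e₀)) hee₀ hbe hwe).trans hwa
        exact hnab (conn_symm hba)
      · rintro rfl
        exact ⟨he₀Xa, hbe₀⟩
    rw [dg, hset, Finset.card_singleton]
  -- connectivity of the side
  have hlift : ∀ u : V, conn ends (· ≠ e₀) u a → conn ends (· ∈ Xa) u a := by
    intro u hu
    induction hu using Relation.ReflTransGen.head_induction_on with
    | refl => exact Relation.ReflTransGen.refl
    | head hstep htail ih =>
        obtain ⟨e, hee₀, he⟩ := hstep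
        refine Relation.ReflTransGen.trans (conn_single ?_ he) ih
        exact hmemXa e _ (by rw [he]; exact Sym2.mem_mk_right _ _) htail
  have htoa : ∀ u : V, dg ends Xa u ≠ 0 → conn ends (· ∈ Xa) u a := by
    intro u hu
    have hpos : 0 < dg ends Xa u := Nat.pos_of_ne_zero hu
    obtain ⟨e, he⟩ := Finset.card_pos.mp hpos
    rw [Finset.mem_filter] at he
    obtain ⟨heXa, hue⟩ := he
    by_cases hua : conn ends (· ≠ e₀) u a
    · exact hlift u hua
    · have hee₀ : e = e₀ := by
        by_contra hee₀
        obtain ⟨w, hwe, hwa⟩ := hXamem e heXa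
        exact hua ((conn_of_edge (A := (· ≠ e₀)) hee₀ hue hwe).trans hwa)
      subst hee₀
      have hub : u = b := by
        rw [hab, Sym2.mem_iff] at hue
        rcases hue with rfl | rfl
        · exact absurd Relation.ReflTransGen.refl hua
        · rfl
      subst hub
      exact conn_single (A := (· ∈ Xa)) he₀Xa (by rw [hab, Sym2.eq_swap])
  exact side Xa b hloop hpend
    (fun u v hu hv => (htoa u hu).trans (conn_symm (htoa v hv)))

end OddColor

/-- If `G` is a connected loopless multigraph containing a bridge (an edge whose
removal disconnects the graph), then `G` admits an odd 3-edge-coloring. -/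
theorem stmt_3 {V E : Type*} [Fintype V] [Fintype E] [Nonempty V]
    (ends : E → Sym2 V)
    (hloopless : ∀ e, ¬ (ends e).IsDiag)
    (hconn : ∀ u v : V,
      Relation.ReflTransGen (fun a b => ∃ e, ends e = s(a, b)) u v)
    (hbridge : ∃ e₀ : E, ¬ ∀ u v : V,
      Relation.ReflTransGen (fun a b => ∃ e, e ≠ e₀ ∧ ends e = s(a, b)) u v) :
    ∃ φ : E → Fin 3, ∀ (v : V) (j : Fin 3),
      {e | φ e = j ∧ v ∈ ends e}.ncard = 0 ∨
        Odd {e | φ e = j ∧ v ∈ ends e}.ncard := by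
  classical
  obtain ⟨e₀, hNC⟩ := hbridge
  obtain ⟨p, q, hpq⟩ := sym2_rep (ends e₀)
  have hpqne : p ≠ q := by
    intro h
    exact hloopless e₀ (by rw [hpq, h]; exact Sym2.mk_isDiag_iff.mpr rfl)
  have hRpq : ¬ conn ends (· ≠ e₀) p q := by
    intro hR
    apply hNC
    intro u v
    have h1 : Relation.ReflTransGen (fun a b => ∃ e, ends e = s(a, b)) u v := hconn u v
    induction h1 with
    | refl => exact Relation.ReflTransGen.refl
    | @tail b c hab hbc ihab =>
        obtain ⟨e, he⟩ := hbc
        by_cases heq : e = e₀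
        · subst heq
          rw [hpq] at he
          rcases Sym2.eq_iff.mp he with ⟨rfl, rfl⟩ | ⟨rfl, rfl⟩
          · exact ihab.trans hR
          · exact ihab.trans (conn_symm hR)
        · exact ihab.tail ⟨e, heq, he⟩
  have hRqp : ¬ conn ends (· ≠ e₀) q p := fun h => hRpq (conn_symm h)
  have hcover : ∀ v, conn ends (· ≠ e₀) v p ∨ conn ends (· ≠ e₀) v q := by
    intro v
    have h1 := hconn p v
    induction h1 with
    | refl => exact Or.inl Relation.ReflTransGen.refl
    | @tail b c hab hbc ih =>
        obtain ⟨e, he⟩ := hbc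
        by_cases heq : e = e₀
        · subst heq
          rw [hpq] at he
          rcases Sym2.eq_iff.mp he with ⟨rfl, rfl⟩ | ⟨rfl, rfl⟩
          · exact Or.inr Relation.ReflTransGen.refl
          · exact Or.inl Relation.ReflTransGen.refl
        · have hcb : conn ends (· ≠ e₀) c b :=
            conn_single (A := (· ≠ e₀)) heq (by rw [he, Sym2.eq_swap])
          rcases ih with h | h
          · exact Or.inl (hcb.trans h)
          · exact Or.inr (hcb.trans h)
  set Xp : Finset E := Finset.univ.filter (fun e => ∃ w ∈ ends e, conn ends (· ≠ e₀) w p)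
    with hXp
  set Xq : Finset E := Finset.univ.filter (fun e => ∃ w ∈ ends e, conn ends (· ≠ e₀) w q)
    with hXq
  have hXpspec : ∀ e, e ∈ Xp ↔ ∃ w ∈ ends e, conn ends (· ≠ e₀) w p := by
    intro e
    rw [hXp, Finset.mem_filter]
    simp
  have hXqspec : ∀ e, e ∈ Xq ↔ ∃ w ∈ ends e, conn ends (· ≠ e₀) w q := by
    intro e
    rw [hXq, Finset.mem_filter]
    simp
  obtain ⟨φa, ha⟩ := sideall hloopless e₀ p q hpq hRpq Xp hXpspec
  obtain ⟨φb, hb⟩ := sideall hloopless e₀ q p (by rw [hpq, Sym2.eq_swap]) hRqp Xq hXqspec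
  have hpe₀ : p ∈ ends e₀ := by rw [hpq]; exact Sym2.mem_mk_left p q
  have hqe₀ : q ∈ ends e₀ := by rw [hpq]; exact Sym2.mem_mk_right p q
  have he₀Xp : e₀ ∈ Xp := (hXpspec e₀).mpr ⟨p, hpe₀, Relation.ReflTransGen.refl⟩
  set σ : Equiv.Perm (Fin 3) := Equiv.swap (φb e₀) (φa e₀) with hσ
  have hσe₀ : σ (φb e₀) = φa e₀ := Equiv.swap_apply_left _ _
  set φ : E → Fin 3 := fun e => if e ∈ Xp then φa e else σ (φb e) with hφ
  refine ⟨φ, ?_⟩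
  intro v j
  by_cases hvp : conn ends (· ≠ e₀) v p
  · have hseteq : {e | φ e = j ∧ v ∈ ends e}
        = ↑(Xp.filter (fun e => φa e = j ∧ v ∈ ends e)) := by
      ext e
      simp only [Set.mem_setOf_eq, Finset.coe_filter, Set.mem_setOf_eq, Finset.mem_filter]
      constructor
      · rintro ⟨hj, hv⟩
        have heXp : e ∈ Xp := (hXpspec e).mpr ⟨v, hv, hvp⟩
        rw [hφ] at hj
        simp only [if_pos heXp] at hj
        exact ⟨heXp, hj, hv⟩
      · rintro ⟨heXp, hj, hv⟩
        refine ⟨?_, hv⟩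
        rw [hφ]
        simp only [if_pos heXp]
        exact hj
    rw [hseteq, Set.ncard_coe_finset]
    exact ha v j
  · have hvq : conn ends (· ≠ e₀) v q := (hcover v).resolve_left hvp
    have hφval : ∀ e, v ∈ ends e → φ e = σ (φb e) := by
      intro e hv
      by_cases heXp : e ∈ Xp
      · have hee₀ : e = e₀ := by
          by_contra hee₀
          obtain ⟨w, hwe, hwp⟩ := (hXpspec e).mp heXp
          exact hvp ((conn_of_edge (A := (· ≠ e₀)) hee₀ hv hwe).trans hwp)
        subst hee₀
        rw [hφ]
        simp only [if_pos heXp]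
        exact hσe₀.symm
      · rw [hφ]
        simp only [if_neg heXp]
    have hseteq : {e | φ e = j ∧ v ∈ ends e}
        = ↑(Xq.filter (fun e => φb e = σ.symm j ∧ v ∈ ends e)) := by
      ext e
      simp only [Set.mem_setOf_eq, Finset.coe_filter, Set.mem_setOf_eq, Finset.mem_filter]
      constructor
      · rintro ⟨hj, hv⟩
        have heXq : e ∈ Xq := (hXqspec e).mpr ⟨v, hv, hvq⟩
        rw [hφval e hv] at hj
        refine ⟨heXq, ?_, hv⟩
        rw [← hj, Equiv.symm_apply_apply]
      · rintro ⟨heXq, hj, hv⟩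
        refine ⟨?_, hv⟩
        rw [hφval e hv, hj, Equiv.apply_symm_apply]
    rw [hseteq, Set.ncard_coe_finset]
    exact hb v (σ.symm j)
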